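/- Let a ∈ ℚ with a > 0, b ∈ ℚ, and let λ_{a,b} denote the automorphism of ℚ[T] mapping P(T) to P(aT+b). Define H(λ_{a,b}) = H(1,a,b), the projective height of the rational point (1,a,b). Then H(λ_{a,b}^{-1}) = H(λ_{a,b}), and H(λλ') ≤ 2 H(λ) H(λ') for any two such automorphisms λ, λ'. -/

import Mathlib

/-- The content of a vector of rationals: the unique positive rational `r` (for a nonzero
vector) such that `r⁻¹ • x` is a primitive integer point. Computed as the gcd of the
numerators after clearing denominators, divided by the common denominator. -/
noncomputable def vcont (x : Fin 3 → ℚ) : ℚ :=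
  let d : ℤ := Finset.univ.lcm fun i => ((x i).den : ℤ)
  ((Finset.univ.gcd fun i => (x i * (d : ℚ)).num : ℤ) : ℚ) / (d : ℚ)

/-- The projective height of a point of `ℚ³`: `‖x‖ / cont(x)`. -/
noncomputable def vheight (x : Fin 3 → ℚ) : ℚ :=
  (Finset.univ.sup' Finset.univ_nonempty fun i => |x i|) / vcont x

/-- `H(λ_{a,b}) := H(1,a,b)`, the height of the automorphism `P(T) ↦ P(aT+b)` of `ℚ[T]`. -/
noncomputable def lamheight (a b : ℚ) : ℚ := vheight ![1, a, b]

lemma den_dvd_of_mul_int {x : ℚ} {n m : ℤ} (h : x * n = m) : (x.den : ℤ) ∣ n := by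
  have h1 : (x.num : ℚ) * n = m * x.den := by
    rw [← Rat.mul_den_eq_num x, mul_comm x _, mul_assoc, h]; ring
  have h2 : x.num * n = m * x.den := by exact_mod_cast h1
  have h3 : (x.den : ℤ) ∣ n * x.num := ⟨m, by linarith⟩
  have hcop : IsCoprime (x.den : ℤ) x.num := by
    rw [Int.isCoprime_iff_gcd_eq_one, Int.gcd]
    simpa [Nat.coprime_comm] using x.reduced
  exact hcop.dvd_of_dvd_mul_right h3

lemma mul_int_of_den_dvd {x : ℚ} {n : ℤ} (h : (x.den : ℤ) ∣ n) : ∃ m : ℤ, x * n = m := by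
  obtain ⟨k, rfl⟩ := h
  exact ⟨x.num * k, by push_cast; rw [← mul_assoc, Rat.mul_den_eq_num]⟩

/-- The content of a positive multiple of a primitive integer vector. -/
lemma vcont_eq (y : Fin 3 → ℤ) (hy : Finset.univ.gcd y = 1)
    (r : ℚ) (hr : 0 < r) (x : Fin 3 → ℚ) (hx : ∀ i, x i = r * (y i : ℚ)) :
    vcont x = r := by
  set q : ℤ := (r.den : ℤ) with hqdef
  set d : ℤ := Finset.univ.lcm fun i => ((x i).den : ℤ) with hddef
  have hrq : r * (q : ℚ) = (r.num : ℚ) := by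
    rw [hqdef]; push_cast; exact Rat.mul_den_eq_num r
  have hxq : ∀ i, x i * (q : ℚ) = ((r.num * y i : ℤ) : ℚ) := by
    intro i
    have : x i * (q : ℚ) = (r * q) * (y i : ℚ) := by rw [hx i]; ring
    rw [this, hrq]; push_cast; ring
  have hdq : d ∣ q := by
    apply Finset.lcm_dvd
    intro i _
    exact den_dvd_of_mul_int (hxq i)
  have hqd : q ∣ d := by
    set t : ℚ := r * (d : ℚ) with htdef
    have ht : ∀ i, ∃ m : ℤ, t * (y i : ℚ) = (m : ℚ) := by
      intro i
      obtain ⟨m, hm⟩ := mul_int_of_den_dvd (x := x i) (n := d)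
        (Finset.dvd_lcm (Finset.mem_univ i))
      exact ⟨m, by rw [htdef, mul_comm r _, mul_assoc, ← hx i, mul_comm _ (x i), hm]⟩
    have htden : (t.den : ℤ) ∣ 1 := by
      rw [← hy]
      apply Finset.dvd_gcd
      intro i _
      obtain ⟨m, hm⟩ := ht i
      exact den_dvd_of_mul_int hm
    have htden1 : t.den = 1 := by
      have := Int.eq_one_of_dvd_one (by positivity) htden
      exact_mod_cast this
    obtain ⟨m, hm⟩ : ∃ m : ℤ, t = (m : ℚ) := ⟨t.num, ((Rat.den_eq_one_iff t).mp htden1).symm⟩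
    exact den_dvd_of_mul_int (x := r) (n := d) (m := m) (by rw [← htdef, hm])
  have hd_nonneg : 0 ≤ d := by
    have : normalize d = d := Finset.normalize_lcm
    exact Int.nonneg_of_normalize_eq_self this
  have hdq' : d = q := Int.dvd_antisymm hd_nonneg (by positivity) hdq hqd
  have hgcd : (Finset.univ.gcd fun i => (x i * (d : ℚ)).num) = r.num := by
    have : ∀ i, (x i * (d : ℚ)).num = r.num * y i := by
      intro i; rw [hdq', hxq i, Rat.num_intCast]
    rw [Finset.gcd_congr rfl fun i _ => this i, Finset.gcd_mul_left, hy, mul_one,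
      Int.normalize_of_nonneg (Rat.num_nonneg.mpr hr.le)]
  rw [vcont]
  simp only [← hddef]
  rw [hgcd, hdq', hqdef]
  push_cast
  exact Rat.num_div_den r

lemma sup3 (f : Fin 3 → ℚ) :
    Finset.univ.sup' Finset.univ_nonempty f = f 0 ⊔ (f 1 ⊔ f 2) := by
  show Finset.sup' {0,1,2} _ f = _
  rw [Finset.sup'_insert, Finset.sup'_insert, Finset.sup'_singleton]
  all_goals simp

lemma gcd3 (f : Fin 3 → ℤ) :
    Finset.univ.gcd f = GCDMonoid.gcd (f 0) (GCDMonoid.gcd (f 1) (f 2)) := by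
  show Finset.gcd {0,1,2} f = _
  rw [Finset.gcd_insert, Finset.gcd_insert, Finset.gcd_singleton,
    ← Int.abs_eq_normalize]
  rcases abs_cases (f 2) with ⟨h, _⟩ | ⟨h, _⟩
  · rw [h]
  · rw [h, gcd_neg]

lemma gcd3_nonneg (f : Fin 3 → ℤ) : 0 ≤ Finset.univ.gcd f := by
  have : normalize (Finset.univ.gcd f) = Finset.univ.gcd f := Finset.normalize_gcd
  exact Int.nonneg_of_normalize_eq_self this

lemma gcd3_pos {f : Fin 3 → ℤ} (hf : f 0 ≠ 0) : 0 < Finset.univ.gcd f := by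
  rcases (gcd3_nonneg f).lt_or_eq with h | h
  · exact h
  · exact absurd ((Finset.gcd_eq_zero_iff.mp h.symm) 0 (Finset.mem_univ 0)) hf

/-- Main computation: if `d • x = w` with `d > 0` then `vheight x = max|x| * d / gcd w`. -/
lemma vheight_formula (x : Fin 3 → ℚ) (w : Fin 3 → ℤ) (d : ℤ) (hd : 0 < d)
    (hw : ∀ i, (d : ℚ) * x i = (w i : ℚ)) (hw0 : w 0 ≠ 0) :
    vheight x = (|x 0| ⊔ (|x 1| ⊔ |x 2|)) * (d : ℚ) / ((Finset.univ.gcd w : ℤ) : ℚ) := by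
  set g : ℤ := Finset.univ.gcd w with hgdef
  have hgdvd : ∀ i, g ∣ w i := fun i => Finset.gcd_dvd (Finset.mem_univ i)
  have hgpos : 0 < g := gcd3_pos hw0
  have hg0 : g ≠ 0 := hgpos.ne'
  set y : Fin 3 → ℤ := fun i => w i / g with hydef
  have hwy : ∀ i, w i = g * y i := fun i => (Int.mul_ediv_cancel' (hgdvd i)).symm
  have hy : Finset.univ.gcd y = 1 := by
    have h1 : Finset.univ.gcd w = normalize g * Finset.univ.gcd y := by
      rw [Finset.gcd_congr rfl fun i _ => hwy i, Finset.gcd_mul_left]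
    rw [Int.normalize_of_nonneg hgpos.le, ← hgdef] at h1
    exact mul_left_cancel₀ hg0 (h1.symm.trans (mul_one g).symm)
  have hr : (0 : ℚ) < (g : ℚ) / (d : ℚ) := by positivity
  have hd0 : (d : ℚ) ≠ 0 := by positivity
  have hg0' : (g : ℚ) ≠ 0 := by exact_mod_cast hg0
  have hx : ∀ i, x i = ((g : ℚ) / d) * (y i : ℚ) := by
    intro i
    have hcast : (y i : ℚ) = (w i : ℚ) / (g : ℚ) := by
      rw [hwy i]; push_cast; field_simp
    rw [hcast, ← hw i]
    field_simp
  rw [vheight, vcont_eq y hy _ hr x hx, sup3]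
  field_simp

/-- `lamheight` via an integral representative. -/
lemma lamheight_eq (u v : ℚ) (d A B : ℤ) (hd : 0 < d)
    (hA : (d : ℚ) * u = (A : ℚ)) (hB : (d : ℚ) * v = (B : ℚ)) :
    lamheight u v
      = (1 ⊔ (|u| ⊔ |v|)) * (d : ℚ) / ((Finset.univ.gcd ![d, A, B] : ℤ) : ℚ) := by
  have h := vheight_formula ![1, u, v] ![d, A, B] d hd ?_ ?_
  · rw [lamheight, h]
    norm_num
    rfl
  · intro i
    fin_cases i <;> simp [hA, hB]
  · simp
    exact hd.ne'

set_option maxHeartbeats 1000000 in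
theorem stmt_4 (a b a' b' : ℚ) (ha : 0 < a) (ha' : 0 < a') :
    lamheight (1 / a) (-b / a) = lamheight a b ∧
    lamheight (a * a') (a' * b + b') ≤ 2 * lamheight a b * lamheight a' b' := by
  -- integral representatives
  set d : ℤ := (a.den : ℤ) * (b.den : ℤ) with hddef
  set A : ℤ := a.num * (b.den : ℤ) with hAdef
  set B : ℤ := b.num * (a.den : ℤ) with hBdef
  set d' : ℤ := (a'.den : ℤ) * (b'.den : ℤ) with hd'def
  set A' : ℤ := a'.num * (b'.den : ℤ) with hA'def
  set B' : ℤ := b'.num * (a'.den : ℤ) with hB'def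
  have hd : 0 < d := by positivity
  have hd' : 0 < d' := by positivity
  have hA : (d : ℚ) * a = (A : ℚ) := by
    push_cast [hddef, hAdef]
    linear_combination (b.den : ℚ) * Rat.mul_den_eq_num a
  have hB : (d : ℚ) * b = (B : ℚ) := by
    push_cast [hddef, hBdef]
    linear_combination (a.den : ℚ) * Rat.mul_den_eq_num b
  have hA' : (d' : ℚ) * a' = (A' : ℚ) := by
    push_cast [hd'def, hA'def]
    linear_combination (b'.den : ℚ) * Rat.mul_den_eq_num a'
  have hB' : (d' : ℚ) * b' = (B' : ℚ) := by
    push_cast [hd'def, hB'def]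
    linear_combination (a'.den : ℚ) * Rat.mul_den_eq_num b'
  have ha0 : a ≠ 0 := ha.ne'
  have hApos : 0 < A := by
    have : 0 < a.num := Rat.num_pos.mpr ha
    positivity
  set g : ℤ := Finset.univ.gcd ![d, A, B] with hgdef
  set g' : ℤ := Finset.univ.gcd ![d', A', B'] with hg'def
  have hgpos : 0 < g := gcd3_pos (by simpa using hd.ne')
  have hg'pos : 0 < g' := gcd3_pos (by simpa using hd'.ne')
  clear_value d A B d' A' B'
  have H1 := lamheight_eq a b d A B hd hA hB
  have H1' := lamheight_eq a' b' d' A' B' hd' hA' hB'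
  clear_value g g'
  constructor
  · -- Part 1
    have hinvA : (A : ℚ) * (1 / a) = (d : ℚ) := by
      rw [← hA]; field_simp
    have hinvB : (A : ℚ) * (-b / a) = ((-B : ℤ) : ℚ) := by
      push_cast
      rw [← hA, ← hB]
      field_simp
    have H2 := lamheight_eq (1 / a) (-b / a) A d (-B) hApos hinvA hinvB
    have hgcdeq : Finset.univ.gcd ![A, d, -B] = g := by
      rw [hgdef, gcd3, gcd3]
      simp only [Matrix.cons_val_zero, Matrix.cons_val_one, Matrix.head_cons,
        Matrix.cons_val_two, Matrix.tail_cons]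
      rw [gcd_neg, ← gcd_assoc, gcd_comm A d, gcd_assoc]
    have hnum : (1 ⊔ (|1 / a| ⊔ |-b / a|)) * (A : ℚ) = (1 ⊔ (|a| ⊔ |b|)) * (d : ℚ) := by
      have hAa : (A : ℚ) = (d : ℚ) * a := hA.symm
      have h1 : |1 / a| = 1 / a := abs_of_pos (by positivity)
      have h2 : |(-b) / a| = |b| / a := by
        rw [abs_div, abs_neg, abs_of_pos ha]
      have h3 : |a| = a := abs_of_pos ha
      rw [show -b / a = (-b) / a by ring, h1, h2, h3, hAa, mul_comm (d : ℚ) a, ← mul_assoc,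
        max_mul_of_nonneg _ _ ha.le, max_mul_of_nonneg _ _ ha.le,
        one_mul, div_mul_cancel₀ _ ha0, div_mul_cancel₀ _ ha0]
      rw [← sup_assoc, sup_comm a 1, sup_assoc]
    rw [H2, H1, hgcdeq, hnum, hgdef]
  · -- Part 2
    have hA'' : ((d * d' : ℤ) : ℚ) * (a * a') = ((A * A' : ℤ) : ℚ) := by
      push_cast
      calc (d : ℚ) * d' * (a * a') = ((d : ℚ) * a) * ((d' : ℚ) * a') := by ring
        _ = (A : ℚ) * A' := by rw [hA, hA']
    have hB'' : ((d * d' : ℤ) : ℚ) * (a' * b + b') = ((A' * B + d * B' : ℤ) : ℚ) := by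
      push_cast
      calc (d : ℚ) * d' * (a' * b + b')
          = ((d' : ℚ) * a') * ((d : ℚ) * b) + (d : ℚ) * ((d' : ℚ) * b') := by ring
        _ = (A' : ℚ) * B + (d : ℚ) * B' := by rw [hA', hB, hB']
    have H2 := lamheight_eq (a * a') (a' * b + b') (d * d') (A * A') (A' * B + d * B')
      (by positivity) hA'' hB''
    set g'' : ℤ := Finset.univ.gcd ![d * d', A * A', A' * B + d * B'] with hg''def
    clear_value g''
    have hg''pos : 0 < g'' := by
      rw [hg''def]; exact gcd3_pos (by simpa using (mul_pos hd hd').ne')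
    have hgd : ∀ i : Fin 3, g ∣ ![d, A, B] i := fun i =>
      hgdef ▸ Finset.gcd_dvd (Finset.mem_univ i)
    have hgd' : ∀ i : Fin 3, g' ∣ ![d', A', B'] i := fun i =>
      hg'def ▸ Finset.gcd_dvd (Finset.mem_univ i)
    have hdvd : g * g' ∣ g'' := by
      rw [hg''def]
      apply Finset.dvd_gcd
      intro i _
      fin_cases i
      · simpa using mul_dvd_mul (hgd 0) (hgd' 0)
      · simpa using mul_dvd_mul (hgd 1) (hgd' 1)
      · show g * g' ∣ A' * B + d * B'
        apply dvd_add
        · have := mul_dvd_mul (hgd 2) (hgd' 1)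
          simpa [mul_comm] using this
        · simpa using mul_dvd_mul (hgd 0) (hgd' 2)
    have hgg'le : ((g * g' : ℤ) : ℚ) ≤ (g'' : ℚ) := by
      exact_mod_cast Int.le_of_dvd hg''pos hdvd
    -- bounds on the sups
    set S : ℚ := 1 ⊔ (|a| ⊔ |b|) with hSdef
    set S' : ℚ := 1 ⊔ (|a'| ⊔ |b'|) with hS'def
    have hS1 : (1 : ℚ) ≤ S := le_sup_left
    have hS'1 : (1 : ℚ) ≤ S' := le_sup_left
    have hSa : |a| ≤ S := le_sup_of_le_right le_sup_left
    have hSb : |b| ≤ S := le_sup_of_le_right le_sup_right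
    have hS'a : |a'| ≤ S' := le_sup_of_le_right le_sup_left
    have hS'b : |b'| ≤ S' := le_sup_of_le_right le_sup_right
    have hSup : 1 ⊔ (|a * a'| ⊔ |a' * b + b'|) ≤ 2 * S * S' := by
      apply sup_le
      · nlinarith
      apply sup_le
      · rw [abs_mul]
        nlinarith [abs_nonneg a, abs_nonneg a']
      · calc |a' * b + b'| ≤ |a' * b| + |b'| := abs_add_le _ _
          _ = |a'| * |b| + |b'| := by rw [abs_mul]
          _ ≤ S' * S + S' := by
              have := mul_le_mul hS'a hSb (abs_nonneg b) (le_trans zero_le_one hS'1)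
              linarith
          _ ≤ 2 * S * S' := by nlinarith
    rw [H1, H1', H2, ← hgdef, ← hg'def]
    have hSpos : (0 : ℚ) < S := lt_of_lt_of_le one_pos hS1
    have hS'pos : (0 : ℚ) < S' := lt_of_lt_of_le one_pos hS'1
    have hfin : (1 ⊔ (|a * a'| ⊔ |a' * b + b'|)) * ((d * d' : ℤ) : ℚ) / (g'' : ℚ)
        ≤ (2 * S * S') * ((d * d' : ℤ) : ℚ) / ((g * g' : ℤ) : ℚ) := by
      apply div_le_div₀
      · have h1 : (0 : ℚ) < ((d * d' : ℤ) : ℚ) := by exact_mod_cast mul_pos hd hd'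
        have := mul_pos (mul_pos (mul_pos two_pos hSpos) hS'pos) h1
        linarith
      · have : (0 : ℚ) ≤ ((d * d' : ℤ) : ℚ) := by positivity
        exact mul_le_mul_of_nonneg_right hSup this
      · exact_mod_cast mul_pos hgpos hg'pos
      · exact hgg'le
    refine hfin.trans (le_of_eq ?_)
    have hgne : (g : ℚ) ≠ 0 := by exact_mod_cast hgpos.ne'
    have hg'ne : (g' : ℚ) ≠ 0 := by exact_mod_cast hg'pos.ne'
    push_cast
    field_simp
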